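/- arXiv:math/0212244 — 2 statements merged into one kernel-verified Lean document; each statement's English description precedes it below -/
import Mathlib

section
/- Let n ≥ 4 and let f_1, …, f_n be linearly independent vectors in EuclideanSpace ℝ (Fin n), each of the form ±e_i ± e_j for some i ≠ j (where e_1, …, e_n is the standard orthonormal basis), and suppose the family is indecomposable. Then the subgroup of linear isometries of EuclideanSpace ℝ (Fin n) generated by the reflections in f_1, …, f_n equals the subgroup generated by all reflections in the vectors e_i + e_j and e_i − e_j, i < j — namely the Weyl group of D_n. (Every maximal rank proper reflection subgroup of D_n is decomposable, so an indecomposable simplex embedded in D_n generates all of D_n.) -/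
open scoped RealInnerProductSpace

/-- The graph whose vertices are the members of the family `f`, two of them being
adjacent iff they are not orthogonal; the family is indecomposable iff this graph
is connected. -/
def gramGraph {E : Type*} [NormedAddCommGroup E] [InnerProductSpace ℝ E]
    {ι : Type*} (f : ι → E) : SimpleGraph ι where
  Adj i j := i ≠ j ∧ ⟪f i, f j⟫ ≠ 0
  symm := ⟨by
    intro i j h
    exact ⟨h.1.symm, by rw [real_inner_comm]; exact h.2⟩⟩
  loopless := ⟨fun i h => h.1 rfl⟩

/-- The reflection in the hyperplane orthogonal to a vector `v`. -/
noncomputable def reflIn {m : ℕ} (v : EuclideanSpace ℝ (Fin m)) :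
    EuclideanSpace ℝ (Fin m) ≃ₗᵢ[ℝ] EuclideanSpace ℝ (Fin m) :=
  Submodule.reflection (ℝ ∙ v)ᗮ

/-- `v` is of the form `±eᵢ ± eⱼ` for the (unordered) pair `{i, j}`. -/
def HasBDPair {m : ℕ} (v : EuclideanSpace ℝ (Fin m)) (i j : Fin m) : Prop :=
  v = EuclideanSpace.single i 1 + EuclideanSpace.single j 1 ∨
  v = EuclideanSpace.single i 1 - EuclideanSpace.single j 1 ∨
  v = EuclideanSpace.single j 1 - EuclideanSpace.single i 1 ∨
  v = -(EuclideanSpace.single i 1 + EuclideanSpace.single j 1)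

namespace DnAux

lemma reflIn_apply {m : ℕ} (v x : EuclideanSpace ℝ (Fin m)) :
    reflIn v x = x - (2 * ⟪v, x⟫ / ⟪v, v⟫) • v := by
  rw [reflIn, Submodule.reflection_orthogonal_apply, Submodule.reflection_singleton_apply,
    real_inner_self_eq_norm_sq, RCLike.ofReal_real_eq_id]
  simp only [id_eq]
  module

lemma reflIn_smul {m : ℕ} (v : EuclideanSpace ℝ (Fin m)) {c : ℝ} (hc : c ≠ 0) :
    reflIn (c • v) = reflIn v := by
  ext x
  have key : 2 * ⟪c • v, x⟫ / ⟪c • v, c • v⟫ * c = 2 * ⟪v, x⟫ / ⟪v, v⟫ := by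
    rw [real_inner_smul_left, real_inner_smul_left, real_inner_smul_right]
    rw [show c * (c * ⟪v, v⟫) = ⟪v, v⟫ * c ^ 2 by ring, div_mul_eq_mul_div,
      show 2 * (c * ⟪v, x⟫) * c = 2 * ⟪v, x⟫ * c ^ 2 by ring,
      mul_div_mul_right _ _ (pow_ne_zero 2 hc)]
  rw [reflIn_apply, reflIn_apply, smul_smul, key]

lemma reflIn_neg {m : ℕ} (v : EuclideanSpace ℝ (Fin m)) : reflIn (-v) = reflIn v := by
  rw [← neg_one_smul ℝ v, reflIn_smul v (by norm_num : (-1:ℝ) ≠ 0)]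

lemma reflIn_inv {m : ℕ} (v : EuclideanSpace ℝ (Fin m)) : (reflIn v)⁻¹ = reflIn v :=
  Submodule.reflection_inv

lemma reflIn_conj {m : ℕ} (g : EuclideanSpace ℝ (Fin m) ≃ₗᵢ[ℝ] EuclideanSpace ℝ (Fin m))
    (v : EuclideanSpace ℝ (Fin m)) :
    g * reflIn v * g⁻¹ = reflIn (g v) := by
  ext x
  simp only [LinearIsometryEquiv.coe_mul, Function.comp_apply, LinearIsometryEquiv.coe_inv]
  rw [reflIn_apply, reflIn_apply, map_sub, map_smul, g.apply_symm_apply,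
    ← g.inner_map_map v (g.symm x), g.apply_symm_apply, g.inner_map_map]

noncomputable def ee {m : ℕ} (i : Fin m) : EuclideanSpace ℝ (Fin m) :=
  EuclideanSpace.single i 1

lemma sgn_ne_zero {σ : ℝ} (hσ : σ ^ 2 = 1) : σ ≠ 0 := by
  rintro rfl; norm_num at hσ

lemma sgn_cases {σ : ℝ} (hσ : σ ^ 2 = 1) : σ = 1 ∨ σ = -1 :=
  mul_self_eq_one_iff.mp (by nlinarith [hσ] : σ * σ = 1)

lemma reflIn_root_swap {m : ℕ} {σ : ℝ} (hσ : σ ^ 2 = 1) (i j : Fin m) :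
    reflIn (ee j + σ • ee i) = reflIn (ee i + σ • ee j) := by
  have h : ee j + σ • ee i = σ • (ee i + σ • ee j) := by
    rw [smul_add, smul_smul, ← sq, hσ, one_smul, add_comm]
  rw [h, reflIn_smul _ (sgn_ne_zero hσ)]

lemma inner_root_share {m : ℕ} (σ τ : ℝ) {i j k : Fin m}
    (hij : i ≠ j) (hik : i ≠ k) (hjk : j ≠ k) :
    ⟪ee i + σ • ee j, ee j + τ • ee k⟫ = σ := by
  simp [ee, inner_add_left, inner_add_right, real_inner_smul_left, real_inner_smul_right,
    EuclideanSpace.inner_single_left, EuclideanSpace.single_apply, hij, hik, hjk,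
    hij.symm, hik.symm, hjk.symm]

lemma inner_root_self {m : ℕ} (σ : ℝ) {i j : Fin m} (hij : i ≠ j) :
    ⟪ee i + σ • ee j, ee i + σ • ee j⟫ = 1 + σ ^ 2 := by
  simp only [inner_add_left, inner_add_right, real_inner_smul_left, real_inner_smul_right]
  simp [ee, inner_add_left, inner_add_right, real_inner_smul_left, real_inner_smul_right,
    EuclideanSpace.inner_single_left, EuclideanSpace.single_apply, hij, hij.symm, sq]

lemma inner_root_disjoint {m : ℕ} (σ τ : ℝ) {i j k l : Fin m}
    (hik : i ≠ k) (hil : i ≠ l) (hjk : j ≠ k) (hjl : j ≠ l) :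
    ⟪ee i + σ • ee j, ee k + τ • ee l⟫ = 0 := by
  simp [ee, inner_add_left, inner_add_right, real_inner_smul_left, real_inner_smul_right,
    EuclideanSpace.inner_single_left, EuclideanSpace.single_apply, hik, hil, hjk, hjl,
    hik.symm, hil.symm, hjk.symm, hjl.symm]

lemma root_step {m : ℕ} {σ τ : ℝ} (hσ : σ ^ 2 = 1) (hτ : τ ^ 2 = 1) {i j k : Fin m}
    (hij : i ≠ j) (hik : i ≠ k) (hjk : j ≠ k) :
    reflIn (ee i + σ • ee j) * reflIn (ee j + τ • ee k) * reflIn (ee i + σ • ee j) =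
      reflIn (ee i + (-(σ * τ)) • ee k) := by
  set α := ee i + σ • ee j with hα
  set β := ee j + τ • ee k with hβ
  have h1 : reflIn α * reflIn β * reflIn α = reflIn (reflIn α β) := by
    rw [← reflIn_conj (reflIn α) β, reflIn_inv]
  have hαβ : ⟪α, β⟫ = σ := inner_root_share σ τ hij hik hjk
  have hαα : ⟪α, α⟫ = 2 := by rw [hα, inner_root_self σ hij, hσ]; norm_num
  have h2 : reflIn α β = (-σ) • (ee i + (-(σ * τ)) • ee k) := by
    rw [reflIn_apply, hαβ, hαα, show 2 * σ / 2 = σ by ring, hα, hβ]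
    have hσ' := sgn_cases hσ
    have hτ' := sgn_cases hτ
    rcases hσ' with rfl | rfl <;> rcases hτ' with rfl | rfl <;> module
  rw [h1, h2, reflIn_smul _ (neg_ne_zero.mpr (sgn_ne_zero hσ))]

variable {n : ℕ} (W : Subgroup (EuclideanSpace ℝ (Fin n) ≃ₗᵢ[ℝ] EuclideanSpace ℝ (Fin n)))

def Good (i j : Fin n) (σ : ℝ) : Prop := reflIn (ee i + σ • ee j) ∈ W

variable {W}

lemma good_symm {i j : Fin n} {σ : ℝ} (hσ : σ ^ 2 = 1) (h : Good W i j σ) : Good W j i σ := by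
  unfold Good at *
  rwa [reflIn_root_swap hσ]

lemma good_trans {i j k : Fin n} {σ τ : ℝ} (hσ : σ ^ 2 = 1) (hτ : τ ^ 2 = 1)
    (hij : i ≠ j) (hik : i ≠ k) (hjk : j ≠ k)
    (h1 : Good W i j σ) (h2 : Good W j k τ) : Good W i k (-(σ * τ)) := by
  have := W.mul_mem (W.mul_mem h1 h2) h1
  unfold Good
  rwa [← root_step hσ hτ hij hik hjk]

end DnAux

open DnAux

/-- Every maximal rank proper reflection subgroup of `Dₙ` is decomposable: an
indecomposable linearly independent system of `n` roots `±eᵢ ± eⱼ` of `Dₙ` (with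
`n ≥ 4`) generates, via the reflections in its members, the full Weyl group of `Dₙ`,
the group generated by all reflections in the vectors `eᵢ + eⱼ` and `eᵢ - eⱼ`. -/
theorem Dn_indecomposable_generates {n : ℕ} (hn : 4 ≤ n)
    (f : Fin n → EuclideanSpace ℝ (Fin n))
    (hli : LinearIndependent ℝ f)
    (hroot : ∀ k, ∃ i j : Fin n, i ≠ j ∧ HasBDPair (f k) i j)
    (hindec : (gramGraph f).Connected) :
    Subgroup.closure (Set.range fun k => reflIn (f k)) =
      Subgroup.closure {r | ∃ i j : Fin n, i ≠ j ∧
        (r = reflIn (EuclideanSpace.single i (1 : ℝ) + EuclideanSpace.single j 1) ∨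
         r = reflIn (EuclideanSpace.single i (1 : ℝ) - EuclideanSpace.single j 1))} := by
  set W := Subgroup.closure (Set.range fun k => reflIn (f k)) with hW
  choose I J hIJ hBD using hroot
  -- each root has the normal form `c • (ee i + σ • ee j)`
  have hform : ∀ k, ∃ σ c : ℝ, σ ^ 2 = 1 ∧ c ≠ 0 ∧ f k = c • (ee (I k) + σ • ee (J k)) := by
    intro k
    rcases hBD k with h | h | h | h
    · exact ⟨1, 1, by norm_num, by norm_num, by rw [h]; unfold ee; module⟩
    · exact ⟨-1, 1, by norm_num, by norm_num, by rw [h]; unfold ee; module⟩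
    · exact ⟨-1, -1, by norm_num, by norm_num, by rw [h]; unfold ee; module⟩
    · exact ⟨1, -1, by norm_num, by norm_num, by rw [h]; unfold ee; module⟩
  have hgen : ∀ k, reflIn (f k) ∈ W := fun k => Subgroup.subset_closure ⟨k, rfl⟩
  have hrefl : ∀ k, ∃ σ : ℝ, σ ^ 2 = 1 ∧ Good W (I k) (J k) σ := by
    intro k
    obtain ⟨σ, c, hσ, hc, hfk⟩ := hform k
    refine ⟨σ, hσ, ?_⟩
    unfold Good
    rw [← reflIn_smul _ hc, ← hfk]
    exact hgen k
  have : Nonempty (Fin n) := ⟨⟨0, by omega⟩⟩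
  -- span is everything
  have hspan : Submodule.span ℝ (Set.range f) = ⊤ :=
    hli.span_eq_top_of_card_eq_finrank (by simp [finrank_euclideanSpace_fin])
  -- every coordinate is used by some root
  have hcov : ∀ i : Fin n, ∃ k, i = I k ∨ i = J k := by
    intro i
    by_contra hcon
    push_neg at hcon
    have hz : ∀ k, ⟪f k, ee i⟫ = 0 := by
      intro k
      obtain ⟨σ, c, hσ, hc, hfk⟩ := hform k
      rw [hfk, real_inner_smul_left, inner_add_left, real_inner_smul_left]
      have h1 : ⟪ee (I k), ee i⟫ = 0 := by
        simp [ee, EuclideanSpace.inner_single_left, EuclideanSpace.single_apply,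
          (hcon k).1, Ne.symm (hcon k).1]
      have h2 : ⟪ee (J k), ee i⟫ = 0 := by
        simp [ee, EuclideanSpace.inner_single_left, EuclideanSpace.single_apply,
          (hcon k).2, Ne.symm (hcon k).2]
      rw [h1, h2]; ring
    have hall : ∀ x ∈ Submodule.span ℝ (Set.range f), ⟪x, ee i⟫ = 0 := by
      intro x hx
      induction hx using Submodule.span_induction with
      | mem x hx => obtain ⟨k, rfl⟩ := hx; exact hz k
      | zero => simp
      | add x y _ _ hx hy => rw [inner_add_left, hx, hy]; ring
      | smul a x _ hx => rw [real_inner_smul_left, hx]; ring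
    have hei : ⟪(ee i : EuclideanSpace ℝ (Fin n)), ee i⟫ = 0 :=
      hall _ (by rw [hspan]; trivial)
    simp [ee, EuclideanSpace.inner_single_left, EuclideanSpace.single_apply] at hei
  -- non-orthogonal roots share a coordinate
  have hshare : ∀ k l : Fin n, ⟪f k, f l⟫ ≠ 0 →
      ∃ v, (v = I k ∨ v = J k) ∧ (v = I l ∨ v = J l) := by
    intro k l hkl
    by_contra hcon
    push_neg at hcon
    have h1 := hcon (I k) (Or.inl rfl)
    have h2 := hcon (J k) (Or.inr rfl)
    apply hkl
    obtain ⟨σ, c, hσ, hc, hfk⟩ := hform k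
    obtain ⟨τ, d, hτ, hd, hfl⟩ := hform l
    rw [hfk, hfl, real_inner_smul_left, real_inner_smul_right,
      inner_root_disjoint σ τ h1.1 h1.2 h2.1 h2.2]
    ring
  -- weak linkage relation
  set WL : Fin n → Fin n → Prop :=
    fun a b => a = b ∨ (a ≠ b ∧ ∃ σ : ℝ, σ ^ 2 = 1 ∧ Good W a b σ) with hWL
  have wsymm : ∀ a b, WL a b → WL b a := by
    rintro a b (rfl | ⟨hab, σ, hσ, h⟩)
    · exact Or.inl rfl
    · exact Or.inr ⟨hab.symm, σ, hσ, good_symm hσ h⟩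
  have wtrans : ∀ a b c, WL a b → WL b c → WL a c := by
    rintro a b c (rfl | ⟨hab, σ, hσ, h1⟩) h2
    · exact h2
    rcases h2 with rfl | ⟨hbc, τ, hτ, h2⟩
    · exact Or.inr ⟨hab, σ, hσ, h1⟩
    by_cases hac : a = c
    · exact Or.inl hac
    · exact Or.inr ⟨hac, -(σ * τ), by linear_combination τ ^ 2 * hσ + hτ,
        good_trans hσ hτ hab hac hbc h1 h2⟩
  have hWLedge : ∀ k, WL (I k) (J k) := fun k => Or.inr ⟨hIJ k, hrefl k⟩
  have hadj : ∀ {k l}, (gramGraph f).Adj k l → WL (I k) (I l) := by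
    intro k l h
    obtain ⟨v, hv1, hv2⟩ := hshare k l h.2
    have w1 : WL (I k) v := by
      rcases hv1 with rfl | rfl
      · exact Or.inl rfl
      · exact hWLedge k
    have w2 : WL v (I l) := by
      rcases hv2 with rfl | rfl
      · exact Or.inl rfl
      · exact wsymm _ _ (hWLedge l)
    exact wtrans _ _ _ w1 w2
  have hwalk : ∀ k l, (gramGraph f).Walk k l → WL (I k) (I l) := by
    intro k l p
    induction p with
    | nil => exact Or.inl rfl
    | cons h p ih => exact wtrans _ _ _ (hadj h) ih
  have hlink : ∀ i j : Fin n, i ≠ j → ∃ σ : ℝ, σ ^ 2 = 1 ∧ Good W i j σ := by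
    intro i j hij
    obtain ⟨k, hk⟩ := hcov i
    obtain ⟨l, hl⟩ := hcov j
    have w1 : WL i (I k) := by
      rcases hk with rfl | rfl
      · exact Or.inl rfl
      · exact wsymm _ _ (hWLedge k)
    obtain ⟨p⟩ := hindec.preconnected k l
    have w3 : WL (I l) j := by
      rcases hl with rfl | rfl
      · exact Or.inl rfl
      · exact hWLedge l
    rcases wtrans _ _ _ (wtrans _ _ _ w1 (hwalk k l p)) w3 with rfl | ⟨_, hs⟩
    · exact absurd rfl hij
    · exact hs
  -- the family of achievable signs cannot be a coboundary, so some pair has both signs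
  have hboth : ∃ a b : Fin n, a ≠ b ∧ Good W a b 1 ∧ Good W a b (-1) := by
    by_contra hcon
    push_neg at hcon
    have huniq : ∀ (a b : Fin n) (σ τ : ℝ), a ≠ b → σ ^ 2 = 1 → τ ^ 2 = 1 →
        Good W a b σ → Good W a b τ → σ = τ := by
      intro a b σ τ hab hσ hτ h1 h2
      rcases sgn_cases hσ with rfl | rfl <;> rcases sgn_cases hτ with rfl | rfl
      · rfl
      · exact absurd h2 (hcon a b hab h1)
      · exact absurd h1 (hcon a b hab h2)
      · rfl
    set i0 : Fin n := ⟨0, by omega⟩ with hi0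
    set η : Fin n → ℝ := fun j => if h : j = i0 then 1 else
      -Classical.choose (hlink i0 j (fun h' => h h'.symm)) with hη
    have hη0 : η i0 = 1 := by simp [hη]
    have hηs : ∀ j, j ≠ i0 → (η j) ^ 2 = 1 ∧ Good W i0 j (-(η j)) := by
      intro j h
      have hspec := Classical.choose_spec (hlink i0 j (fun h' => h h'.symm))
      constructor
      · rw [hη]
        simp only [dif_neg h, neg_sq]
        exact hspec.1
      · rw [hη]
        simp only [dif_neg h, neg_neg]
        exact hspec.2
    have hηsq : ∀ j, (η j) ^ 2 = 1 := by
      intro j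
      by_cases h : j = i0
      · rw [h, hη0]; norm_num
      · exact (hηs j h).1
    have key : ∀ i j : Fin n, i ≠ j → Good W i j (-(η i * η j)) := by
      intro i j hij
      by_cases hi : i = i0
      · subst hi
        have h2 := (hηs j (Ne.symm hij)).2
        rw [show -(η i0 * η j) = -(η j) by rw [hη0]; ring]
        exact h2
      by_cases hj : j = i0
      · subst hj
        have h2 := good_symm (by rw [neg_sq]; exact hηsq i) (hηs i hi).2
        rw [show -(η i * η i0) = -(η i) by rw [hη0]; ring]
        exact h2
      obtain ⟨σ, hσ, hg⟩ := hlink i j hij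
      have h0i := (hηs i hi).2
      have hsqi : (-(η i)) ^ 2 = 1 := by rw [neg_sq]; exact hηsq i
      have h0j : Good W i0 j (-(-(η i) * σ)) :=
        good_trans hsqi hσ (fun h => hi h.symm) (fun h => hj h.symm) hij h0i hg
      rw [show -(-(η i) * σ) = η i * σ by ring] at h0j
      have heq : η i * σ = -(η j) :=
        huniq i0 j _ _ (fun h => hj h.symm)
          (by linear_combination σ ^ 2 * hηsq i + hσ)
          (by rw [neg_sq]; exact hηsq j) h0j (hηs j hj).2
      have hσval : σ = -(η i * η j) := by
        linear_combination η i * heq + (-σ) * hηsq i - η i * η j * hηsq i + η i * η j * hηsq i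
      rw [hσval] at hg
      exact hg
    set ηv : EuclideanSpace ℝ (Fin n) := WithLp.toLp 2 η with hηv
    have horth : ∀ k, ⟪f k, ηv⟫ = 0 := by
      intro k
      obtain ⟨σ, c, hσ, hc, hfk⟩ := hform k
      have hg : Good W (I k) (J k) σ := by
        unfold Good
        rw [← reflIn_smul _ hc, ← hfk]
        exact hgen k
      have hσval : σ = -(η (I k) * η (J k)) :=
        huniq (I k) (J k) _ _ (hIJ k) hσ
          (by linear_combination (η (J k)) ^ 2 * hηsq (I k) + hηsq (J k))
          hg (key _ _ (hIJ k))
      have e1 : ⟪(ee (I k) : EuclideanSpace ℝ (Fin n)), ηv⟫ = η (I k) := by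
        simp [ee, EuclideanSpace.inner_single_left, hηv]
      have e2 : ⟪(ee (J k) : EuclideanSpace ℝ (Fin n)), ηv⟫ = η (J k) := by
        simp [ee, EuclideanSpace.inner_single_left, hηv]
      rw [hfk, real_inner_smul_left, inner_add_left, real_inner_smul_left, e1, e2, hσval]
      linear_combination (-(c * η (I k))) * hηsq (J k)
    have hall : ∀ x ∈ Submodule.span ℝ (Set.range f), ⟪x, ηv⟫ = 0 := by
      intro x hx
      induction hx using Submodule.span_induction with
      | mem x hx => obtain ⟨k, rfl⟩ := hx; exact horth k
      | zero => simp
      | add x y _ _ hx hy => rw [inner_add_left, hx, hy]; ring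
      | smul a x _ hx => rw [real_inner_smul_left, hx]; ring
    have h0 : ηv = 0 := inner_self_eq_zero.mp (hall ηv (by rw [hspan]; trivial))
    have hzero : η i0 = 0 := by simpa [hηv] using congrArg (fun v => v i0) h0
    rw [hη0] at hzero
    norm_num at hzero
  obtain ⟨a, b, hab, hab1, hab2⟩ := hboth
  have gcast : ∀ {x y : Fin n} {σ τ : ℝ}, σ = τ → Good W x y σ → Good W x y τ :=
    fun h hg => h ▸ hg
  have bstep : ∀ x y z : Fin n, x ≠ y → x ≠ z → y ≠ z →
      Good W x y 1 → Good W x y (-1) → (∃ τ : ℝ, τ ^ 2 = 1 ∧ Good W y z τ) →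
      Good W x z 1 ∧ Good W x z (-1) := by
    rintro x y z hxy hxz hyz h1 h2 ⟨τ, hτ, hg⟩
    have c1 : Good W x z (-(1 * τ)) := good_trans (by norm_num) hτ hxy hxz hyz h1 hg
    have c2 : Good W x z (-(-1 * τ)) := good_trans (by norm_num) hτ hxy hxz hyz h2 hg
    rcases sgn_cases hτ with rfl | rfl
    · exact ⟨gcast (by norm_num) c2, gcast (by norm_num) c1⟩
    · exact ⟨gcast (by norm_num) c1, gcast (by norm_num) c2⟩
  have claim1 : ∀ c : Fin n, c ≠ a → Good W a c 1 ∧ Good W a c (-1) := by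
    intro c hc
    by_cases hcb : c = b
    · subst hcb
      exact ⟨hab1, hab2⟩
    · exact bstep a b c hab (Ne.symm hc) (fun h => hcb h.symm) hab1 hab2
        (hlink b c (fun h => hcb h.symm))
  have final : ∀ i j : Fin n, i ≠ j → Good W i j 1 ∧ Good W i j (-1) := by
    intro i j hij
    by_cases hia : i = a
    · subst hia
      exact claim1 j (Ne.symm hij)
    by_cases hja : j = a
    · subst hja
      obtain ⟨g1, g2⟩ := claim1 i hia
      exact ⟨good_symm (by norm_num) g1, good_symm (by norm_num) g2⟩
    obtain ⟨g1, g2⟩ := claim1 i hia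
    exact bstep i a j hia hij (fun h => hja h.symm)
      (good_symm (by norm_num) g1) (good_symm (by norm_num) g2)
      (hlink a j (fun h => hja h.symm))
  -- conclude
  apply le_antisymm
  · rw [hW]
    refine (Subgroup.closure_le _).mpr ?_
    rintro r ⟨k, rfl⟩
    obtain ⟨σ, c, hσ, hc, hfk⟩ := hform k
    show reflIn (f k) ∈ _
    rw [hfk, reflIn_smul _ hc]
    apply Subgroup.subset_closure
    rcases sgn_cases hσ with rfl | rfl
    · exact ⟨I k, J k, hIJ k, Or.inl (congrArg reflIn (by unfold ee; module))⟩
    · exact ⟨I k, J k, hIJ k, Or.inr (congrArg reflIn (by unfold ee; module))⟩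
  · refine (Subgroup.closure_le _).mpr ?_
    rintro r ⟨i, j, hij, (rfl | rfl)⟩
    · have hg := (final i j hij).1
      unfold Good at hg
      rw [show (EuclideanSpace.single i (1:ℝ) + EuclideanSpace.single j 1 :
          EuclideanSpace ℝ (Fin n)) = ee i + (1:ℝ) • ee j by unfold ee; module]
      exact hg
    · have hg := (final i j hij).2
      unfold Good at hg
      rw [show (EuclideanSpace.single i (1:ℝ) - EuclideanSpace.single j 1 :
          EuclideanSpace ℝ (Fin n)) = ee i + (-1:ℝ) • ee j by unfold ee; module]
      exact hg
end

section
/- Let G be a connected simple graph on the vertex set Fin n with exactly n edges (so G contains exactly one cycle), and let {a, b} be an edge of G that is not a bridge (i.e., removing it leaves G connected; equivalently, it lies on the cycle). Then the family of vectors in EuclideanSpace ℝ (Fin n) consisting of e_a + e_b together with one vector e_i − e_j for each edge {i, j} ≠ {a, b} of G is linearly independent and indecomposable. -/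
open scoped RealInnerProductSpace

open SimpleGraph in
/-- Let `G` be a connected graph on `Fin n` with exactly `n` edges, and `{a, b}` a
non-bridge edge of `G`. Then the family of vectors consisting of `e_a + e_b` for the
edge `{a, b}` and one vector `eᵢ - eⱼ` for every other edge `{i, j}` is linearly
independent and indecomposable. -/
theorem Dn_unicyclic_vectors_linearIndependent_indecomposable {n : ℕ}
    (G : SimpleGraph (Fin n)) (hconn : G.Connected)
    (hcard : G.edgeSet.ncard = n)
    (a b : Fin n) (hab : s(a, b) ∈ G.edgeSet)
    (hnb : ¬ G.IsBridge s(a, b))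
    (vec : G.edgeSet → EuclideanSpace ℝ (Fin n))
    (hvec_ab : vec ⟨s(a, b), hab⟩ =
      EuclideanSpace.single a 1 + EuclideanSpace.single b 1)
    (hvec : ∀ e : G.edgeSet, (e : Sym2 (Fin n)) ≠ s(a, b) →
      ∃ i j : Fin n, (e : Sym2 (Fin n)) = s(i, j) ∧
        vec e = EuclideanSpace.single i 1 - EuclideanSpace.single j 1) :
    LinearIndependent ℝ vec ∧ (gramGraph vec).Connected := by
  classical
  have hadj : G.Adj a b := hab
  have hne : a ≠ b := hadj.ne
  set T : SimpleGraph (Fin n) := G \ fromEdgeSet {s(a, b)} with hT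
  have hTadj : ∀ {x y : Fin n}, T.Adj x y ↔ G.Adj x y ∧ s(x, y) ≠ s(a, b) := by
    intro x y
    simp only [hT, sdiff_adj, fromEdgeSet_adj, Set.mem_singleton_iff]
    constructor
    · rintro ⟨hg, h⟩; exact ⟨hg, fun he => h ⟨he, hg.ne⟩⟩
    · rintro ⟨hg, h⟩; exact ⟨hg, fun he => h he.1⟩
  have hreachab : T.Reachable a b := by
    rw [isBridge_iff] at hnb
    push_neg at hnb
    exact hnb
  have hTpre : ∀ x y : Fin n, T.Reachable x y := by
    intro x y
    obtain ⟨w⟩ := hconn x y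
    induction w with
    | nil => exact Reachable.refl _
    | @cons x z y h p ih =>
      refine Reachable.trans ?_ ih
      by_cases he : s(x, z) = s(a, b)
      · rw [Sym2.eq_iff] at he
        rcases he with ⟨rfl, rfl⟩ | ⟨rfl, rfl⟩
        · exact hreachab
        · exact hreachab.symm
      · exact (hTadj.mpr ⟨h, he⟩).reachable
  -- Linear independence
  haveI : Fintype ↥G.edgeSet := Set.Finite.fintype (Set.toFinite _)
  set W : Submodule ℝ (EuclideanSpace ℝ (Fin n)) :=
    Submodule.span ℝ (Set.range vec) with hW
  have hmemT : ∀ {x y : Fin n}, T.Adj x y →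
      (EuclideanSpace.single x 1 - EuclideanSpace.single y 1 : EuclideanSpace ℝ (Fin n)) ∈ W := by
    intro x y hxy
    obtain ⟨hG, hne'⟩ := hTadj.mp hxy
    have hGe : s(x, y) ∈ G.edgeSet := hG
    obtain ⟨i, j, hij, hveq⟩ := hvec ⟨s(x, y), hGe⟩ hne'
    have hvw : vec ⟨s(x, y), hGe⟩ ∈ W :=
      Submodule.subset_span ⟨⟨s(x, y), hGe⟩, rfl⟩
    rcases Sym2.eq_iff.mp hij with ⟨rfl, rfl⟩ | ⟨rfl, rfl⟩
    · rwa [hveq] at hvw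
    · rw [hveq] at hvw
      have := W.neg_mem hvw
      rwa [neg_sub] at this
  have hdiff : ∀ x y : Fin n,
      (EuclideanSpace.single x 1 - EuclideanSpace.single y 1 : EuclideanSpace ℝ (Fin n)) ∈ W := by
    intro x y
    obtain ⟨w⟩ := hTpre x y
    induction w with
    | nil => simp only [sub_self]; exact W.zero_mem
    | @cons x z y h p ih =>
      have : (EuclideanSpace.single x 1 - EuclideanSpace.single y 1 : EuclideanSpace ℝ (Fin n))
          = (EuclideanSpace.single x 1 - EuclideanSpace.single z 1)
            + (EuclideanSpace.single z 1 - EuclideanSpace.single y 1) := by abel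
      rw [this]
      exact W.add_mem (hmemT h) ih
  have habW : (EuclideanSpace.single a 1 + EuclideanSpace.single b 1 :
      EuclideanSpace ℝ (Fin n)) ∈ W := by
    rw [← hvec_ab]; exact Submodule.subset_span ⟨⟨s(a, b), hab⟩, rfl⟩
  have hsingle : ∀ x : Fin n,
      (EuclideanSpace.single x 1 : EuclideanSpace ℝ (Fin n)) ∈ W := by
    have haW : (EuclideanSpace.single a 1 : EuclideanSpace ℝ (Fin n)) ∈ W := by
      have h2 : (EuclideanSpace.single a 1 : EuclideanSpace ℝ (Fin n)) =
          (1/2 : ℝ) • ((EuclideanSpace.single a 1 + EuclideanSpace.single b 1)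
            + (EuclideanSpace.single a 1 - EuclideanSpace.single b 1)) := by module
      rw [h2]
      exact W.smul_mem _ (W.add_mem habW (hdiff a b))
    intro x
    have : (EuclideanSpace.single x 1 : EuclideanSpace ℝ (Fin n))
        = EuclideanSpace.single a 1 - (EuclideanSpace.single a 1 - EuclideanSpace.single x 1) := by
      abel
    rw [this]
    exact W.sub_mem haW (hdiff a x)
  have hspan : ⊤ ≤ W := by
    rw [← (EuclideanSpace.basisFun (Fin n) ℝ).toBasis.span_eq]
    refine Submodule.span_le.mpr ?_
    rintro _ ⟨i, rfl⟩
    simpa [EuclideanSpace.basisFun_apply] using hsingle i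
  have hcardι : Fintype.card ↥G.edgeSet = n := by
    rw [← Set.toFinset_card, ← Set.ncard_eq_toFinset_card', hcard]
  have hLI : LinearIndependent ℝ vec :=
    linearIndependent_of_top_le_span_of_card_eq_finrank hspan
      (by rw [hcardι, finrank_euclideanSpace_fin])
  -- Connectivity of the gram graph
  have hrep : ∀ e : G.edgeSet, ∃ i j : Fin n, i ≠ j ∧ (e : Sym2 (Fin n)) = s(i, j) ∧
      ∃ ε : ℝ, (ε = 1 ∨ ε = -1) ∧
        vec e = EuclideanSpace.single i 1 + ε • EuclideanSpace.single j 1 := by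
    intro e
    by_cases he : (e : Sym2 (Fin n)) = s(a, b)
    · have heq : e = ⟨s(a, b), hab⟩ := Subtype.ext he
      exact ⟨a, b, hne, he, 1, Or.inl rfl, by rw [heq, hvec_ab]; simp⟩
    · obtain ⟨i, j, hij, hv⟩ := hvec e he
      have hij' : i ≠ j := by
        have h2 := e.2
        rw [hij, mem_edgeSet] at h2
        exact h2.ne
      refine ⟨i, j, hij', hij, -1, Or.inr rfl, ?_⟩
      rw [hv]; simp [sub_eq_add_neg]
  have key : ∀ e f : G.edgeSet, e ≠ f → ∀ u : Fin n,
      u ∈ (e : Sym2 (Fin n)) → u ∈ (f : Sym2 (Fin n)) → ⟪vec e, vec f⟫ ≠ 0 := by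
    intro e f hef u hue huf
    obtain ⟨i, j, hij, hesym, ε, hε, hve⟩ := hrep e
    obtain ⟨k, l, hkl, hfsym, ε', hε', hvf⟩ := hrep f
    have hfapp : ∀ t : Fin n, (vec f) t =
        (if t = k then 1 else 0) + ε' * (if t = l then 1 else 0) := by
      intro t; rw [hvf]
      simp [EuclideanSpace.single_apply]
    have hinner : ⟪vec e, vec f⟫ = (vec f) i + ε * (vec f) j := by
      rw [hve, inner_add_left, real_inner_smul_left,
        EuclideanSpace.inner_single_left, EuclideanSpace.inner_single_left]
      simp
    have hnsym : s(i, j) ≠ s(k, l) := by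
      rw [← hesym, ← hfsym]
      exact fun h => hef (Subtype.ext h)
    rw [hesym, Sym2.mem_iff] at hue
    rw [hfsym, Sym2.mem_iff] at huf
    rw [hinner, hfapp i, hfapp j]
    rcases hue with rfl | rfl <;> rcases huf with rfl | rfl
    · -- u = i = k
      have h1 : u ≠ l := hkl
      have h2 : j ≠ u := Ne.symm hij
      have h3 : j ≠ l := by
        intro h; subst h; exact hnsym rfl
      simp [h1, h2, h3]
    · -- u = i = l
      have h1 : u ≠ k := Ne.symm hkl
      have h2 : j ≠ k := by
        intro h; subst h
        exact hnsym (Sym2.eq_swap)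
      have h3 : j ≠ u := Ne.symm hij
      rcases hε' with rfl | rfl <;> simp [h1, h2, h3]
    · -- u = j = k
      have h1 : i ≠ u := hij
      have h2 : i ≠ l := by
        intro h; subst h
        exact hnsym (Sym2.eq_swap)
      have h3 : u ≠ l := hkl
      rcases hε with rfl | rfl <;> simp [h1, h2, h3]
    · -- u = j = l
      have h1 : i ≠ k := by
        intro h; subst h; exact hnsym rfl
      have h2 : i ≠ u := hij
      have h3 : u ≠ k := Ne.symm hkl
      rcases hε with rfl | rfl <;> rcases hε' with rfl | rfl <;> simp [h1, h2, h3]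
  have reachshare : ∀ e f : G.edgeSet, ∀ u : Fin n,
      u ∈ (e : Sym2 (Fin n)) → u ∈ (f : Sym2 (Fin n)) →
      (gramGraph vec).Reachable e f := by
    intro e f u hue huf
    by_cases hef : e = f
    · exact hef ▸ Reachable.refl _
    · exact (Adj.reachable (G := gramGraph vec) (show e ≠ f ∧ ⟪vec e, vec f⟫ ≠ 0 from ⟨hef, key e f hef u hue huf⟩))
  have walkreach : ∀ {x y : Fin n} (w : G.Walk x y) (e f : G.edgeSet),
      x ∈ (e : Sym2 (Fin n)) → y ∈ (f : Sym2 (Fin n)) →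
      (gramGraph vec).Reachable e f := by
    intro x y w
    induction w with
    | nil =>
      intro e f hx hy
      exact reachshare e f _ hx hy
    | @cons x z y h p ih =>
      intro e f hx hy
      have hz : s(x, z) ∈ G.edgeSet := h
      refine Reachable.trans (reachshare e ⟨s(x, z), hz⟩ x hx ?_) (ih ⟨s(x, z), hz⟩ f ?_ hy)
      · exact Sym2.mem_mk_left x z
      · exact Sym2.mem_mk_right x z
  refine ⟨hLI, ?_⟩
  haveI : Nonempty ↥G.edgeSet := ⟨⟨s(a, b), hab⟩⟩
  constructor
  intro e f
  obtain ⟨i, j, _, hesym, _⟩ := hrep e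
  obtain ⟨k, l, _, hfsym, _⟩ := hrep f
  obtain ⟨w⟩ := hconn i k
  refine walkreach w e f ?_ ?_
  · rw [hesym]; exact Sym2.mem_mk_left i j
  · rw [hfsym]; exact Sym2.mem_mk_left k l
end
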